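/- If (A,B) is a separation of H of order k and β is an immersion of H in G, then G contains k pairwise edge-disjoint paths from β(A) to β(B); in particular, G contains no separation (C,D) of order less than k with β(A) ⊆ C and β(B) ⊆ D. -/

import Mathlib

/-- A finite multigraph without loops: vertices `V`, edges `E`,
each edge has an unordered pair of distinct endpoints. -/
structure Multigraph where
  V : Type
  E : Type
  [fV : Fintype V]
  [fE : Fintype E]
  [dV : DecidableEq V]
  [dE : DecidableEq E]
  ends : E → Sym2 V
  noLoop : ∀ e, ¬ (ends e).IsDiag

attribute [instance] Multigraph.fV Multigraph.fE Multigraph.dV Multigraph.dE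

namespace Multigraph

/-- Walks in a multigraph. -/
inductive Walk (G : Multigraph) : G.V → G.V → Type
  | nil (v : G.V) : Walk G v v
  | cons {u v w : G.V} (e : G.E) (h : G.ends e = s(u, v)) (p : Walk G v w) : Walk G u w

/-- The list of edges traversed by a walk. -/
def Walk.edges {G : Multigraph} : {u v : G.V} → G.Walk u v → List G.E
  | _, _, .nil _ => []
  | _, _, .cons e _ p => e :: p.edges

/-- The list of vertices visited by a walk. -/
def Walk.support {G : Multigraph} : {u v : G.V} → G.Walk u v → List G.V
  | u, _, .nil _ => [u]
  | u, _, .cons _ _ p => u :: p.support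

/-- A walk is a path if it visits no vertex twice. -/
def Walk.IsPath {G : Multigraph} {u v : G.V} (p : G.Walk u v) : Prop := p.support.Nodup

/-- Data of an immersion of `H` into `G`: an injective map on vertices and,
for each edge of `H`, a path in `G` joining the images of its endpoints,
the paths being pairwise edge-disjoint. -/
structure ImmersionData (H G : Multigraph) where
  vmap : H.V → G.V
  inj : Function.Injective vmap
  pstart : H.E → G.V
  pend : H.E → G.V
  walk : ∀ e, G.Walk (pstart e) (pend e)
  ends_eq : ∀ e, s(pstart e, pend e) = (H.ends e).map vmap
  isPath : ∀ e, (walk e).IsPath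
  edgeDisj : ∀ e e', e ≠ e' → List.Disjoint (walk e).edges (walk e').edges

/-- `H` immerses in `G`. -/
def Immerses (H G : Multigraph) : Prop := Nonempty (ImmersionData H G)

/-- Data witnessing that `G` contains a subdivision of `H` as a subgraph
(i.e. `H` is a topological minor of `G`): as an immersion, but moreover the
paths may only meet at images of common endpoints. -/
structure SubdivisionData (H G : Multigraph) extends ImmersionData H G where
  vtxDisj : ∀ e e', e ≠ e' → ∀ x, x ∈ (walk e).support → x ∈ (walk e').support →
    ∃ w, x = vmap w ∧ w ∈ H.ends e ∧ w ∈ H.ends e'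

/-- `G` contains a subdivision of `H` as a subgraph. -/
def ContainsSubdivision (H G : Multigraph) : Prop := Nonempty (SubdivisionData H G)

/-- The complete bipartite graph `K_{3,3}`. -/
def K33 : Multigraph where
  V := Fin 3 ⊕ Fin 3
  E := Fin 3 × Fin 3
  ends e := s(Sum.inl e.1, Sum.inr e.2)
  noLoop e := by simp [Sym2.mk_isDiag_iff]

/-- The complete graph `K_5`. -/
def K5 : Multigraph where
  V := Fin 5
  E := {p : Fin 5 × Fin 5 // p.1 < p.2}
  ends e := s(e.1.1, e.1.2)
  noLoop e := by simpa [Sym2.mk_isDiag_iff] using e.2.ne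

variable (G : Multigraph)

/-- The degree of a vertex: the number of incident edges. -/
def deg (v : G.V) : ℕ := (Finset.univ.filter fun e => v ∈ G.ends e).card

/-- The multiplicity of the (possible) edge between `u` and `v`. -/
def mult (u v : G.V) : ℕ := (Finset.univ.filter fun e => G.ends e = s(u, v)).card

/-- The edge cut determined by a set `A` of vertices. -/
def cut (A : Finset G.V) : Finset G.E :=
  Finset.univ.filter fun e => ∃ u ∈ A, ∃ v ∈ Aᶜ, G.ends e = s(u, v)

/-- Every edge cut of `G` has at least `k` edges. -/
def EdgeConnGe (k : ℕ) : Prop :=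
  ∀ A : Finset G.V, A.Nonempty → A ≠ Finset.univ → k ≤ (G.cut A).card

/-- Internally 4-edge-connected: 3-edge-connected and every 3-edge cut has a
side consisting of a single vertex. -/
def Internally4EC : Prop :=
  G.EdgeConnGe 3 ∧ ∀ A : Finset G.V, A.Nonempty → A ≠ Finset.univ →
    (G.cut A).card = 3 → A.card = 1 ∨ Aᶜ.card = 1

/-- Weakly 5-edge-connected: internally 4-edge-connected and every 4-edge cut
has a side with at most two vertices. -/
def Weakly5EC : Prop :=
  G.Internally4EC ∧ ∀ A : Finset G.V, A.Nonempty → A ≠ Finset.univ →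
    (G.cut A).card = 4 → A.card ≤ 2 ∨ Aᶜ.card ≤ 2

/-- `G` is `d`-regular. -/
def IsRegular (d : ℕ) : Prop := ∀ v, G.deg v = d

/-- `G` is connected. -/
def Connected : Prop := ∀ u v : G.V, Nonempty (G.Walk u v)

/-- `v` is a cut-vertex: the remaining vertices split into two nonempty parts
with no edge between them. -/
def IsCutVertex (v : G.V) : Prop :=
  ∃ C D : Finset G.V, C.Nonempty ∧ D.Nonempty ∧ Disjoint C D ∧ v ∉ C ∧ v ∉ D ∧
    (∀ x : G.V, x ∈ C ∪ D ∨ x = v) ∧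
    ∀ e : G.E, ¬ ∃ u ∈ C, ∃ w ∈ D, G.ends e = s(u, w)

/-- `G` is 2-connected. -/
def TwoConnected : Prop :=
  G.Connected ∧ 3 ≤ Fintype.card G.V ∧ ∀ v, ¬ G.IsCutVertex v

/-- Planarity, via Kuratowski's characterization: no subdivision of `K_5`
nor of `K_{3,3}` as a subgraph. -/
def Planar : Prop := ¬ ContainsSubdivision K5 G ∧ ¬ ContainsSubdivision K33 G

variable {G} in
/-- Concatenation of walks. -/
def Walk.append : {u v w : G.V} → G.Walk u v → G.Walk v w → G.Walk u w
  | _, _, _, .nil _, q => q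
  | _, _, _, .cons e h p, q => .cons e h (p.append q)

variable {G} in
/-- Reversal of a walk. -/
def Walk.reverse : {u v : G.V} → G.Walk u v → G.Walk v u
  | _, _, .nil v => .nil v
  | _, _, .cons e h p => p.reverse.append (.cons e (h.trans (Sym2.eq_swap)) (.nil _))

variable {G} in
lemma Walk.edges_append : ∀ {u v w : G.V} (p : G.Walk u v) (q : G.Walk v w),
    (p.append q).edges = p.edges ++ q.edges
  | _, _, _, .nil _, _ => rfl
  | _, _, _, .cons e h p, q => by
      simp [Walk.append, Walk.edges, Walk.edges_append p q]

variable {G} in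
lemma Walk.edges_reverse : ∀ {u v : G.V} (p : G.Walk u v),
    p.reverse.edges = p.edges.reverse
  | _, _, .nil _ => rfl
  | _, _, .cons e h p => by
      simp [Walk.reverse, Walk.edges_append, Walk.edges, Walk.edges_reverse p]

variable {G} in
lemma Walk.support_eq_cons : ∀ {u v : G.V} (p : G.Walk u v),
    p.support = u :: p.support.tail
  | _, _, .nil _ => rfl
  | _, _, .cons _ _ _ => rfl

variable {G} in
lemma Walk.support_append : ∀ {u v w : G.V} (p : G.Walk u v) (q : G.Walk v w),
    (p.append q).support = p.support.dropLast ++ q.support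
  | _, _, _, .nil _, q => rfl
  | u, _, _, .cons e h p, q => by
      have h1 := Walk.support_append p q
      simp only [Walk.append, Walk.support, h1]
      rw [p.support_eq_cons]
      rfl

variable {G} in
lemma Walk.support_reverse : ∀ {u v : G.V} (p : G.Walk u v),
    p.reverse.support = p.support.reverse
  | _, _, .nil _ => rfl
  | u, v, .cons e h p => by
      simp only [Walk.reverse, Walk.support_append, Walk.support_reverse p, Walk.support]
      rw [p.support_eq_cons]
      simp

variable {G} in
lemma Walk.isPath_reverse {u v : G.V} (p : G.Walk u v) (hp : p.IsPath) :
    p.reverse.IsPath := by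
  unfold Walk.IsPath at *
  rw [Walk.support_reverse]
  simpa using hp

variable {G} in
lemma Walk.exists_cut_edge {C : Finset G.V} :
    ∀ {u v : G.V} (p : G.Walk u v), u ∈ C → v ∉ C →
      ∃ e ∈ p.edges, e ∈ G.cut C
  | _, _, .nil _, hu, hv => absurd hu hv
  | u, w, .cons (v := v) e h p, hu, hw => by
      by_cases hv : v ∈ C
      · obtain ⟨e', he', hc⟩ := Walk.exists_cut_edge p hv hw
        exact ⟨e', List.mem_cons_of_mem _ he', hc⟩
      · refine ⟨e, List.mem_cons_self, ?_⟩
        simp only [Multigraph.cut, Finset.mem_filter, Finset.mem_univ, true_and]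
        exact ⟨u, hu, v, Finset.mem_compl.2 hv, h⟩

end Multigraph

open Multigraph in
/-- If `(A, Aᶜ)` is a separation of `H` of order `k` and `β` is an immersion of
`H` in `G`, then `G` contains `k` pairwise edge-disjoint paths from `β(A)` to
`β(Aᶜ)`; in particular, `G` has no separation `(C, Cᶜ)` of order less than `k`
with `β(A) ⊆ C` and `β(Aᶜ) ⊆ Cᶜ`. -/
theorem immersion_paths_across_separation (H G : Multigraph) (hH : H.Connected)
    (β : ImmersionData H G) (A : Finset H.V) (hA : A.Nonempty)
    (hA' : A ≠ Finset.univ) (k : ℕ) (hk : (H.cut A).card = k) :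
    (∃ P : Fin k → Σ u v : G.V, G.Walk u v,
      (∀ i, (P i).1 ∈ A.image β.vmap) ∧
      (∀ i, (P i).2.1 ∈ Aᶜ.image β.vmap) ∧
      (∀ i, (P i).2.2.IsPath) ∧
      (∀ i j, i ≠ j → List.Disjoint (P i).2.2.edges (P j).2.2.edges)) ∧
    (∀ C : Finset G.V,
      (∀ a ∈ A, β.vmap a ∈ C) → (∀ b ∈ Aᶜ, β.vmap b ∈ Cᶜ) →
      k ≤ (G.cut C).card) := by
  classical
  set g : Fin k → H.cut A := fun i => (Finset.equivFinOfCardEq hk).symm i with hg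
  have hginj : Function.Injective g := (Finset.equivFinOfCardEq hk).symm.injective
  have key : ∀ i : Fin k, ∃ t : Σ u v : G.V, G.Walk u v,
      t.1 ∈ A.image β.vmap ∧ t.2.1 ∈ Aᶜ.image β.vmap ∧ t.2.2.IsPath ∧
      ∀ e ∈ t.2.2.edges, e ∈ (β.walk (g i : H.E)).edges := by
    intro i
    have hmem : (g i : H.E) ∈ H.cut A := (g i).2
    simp only [Multigraph.cut, Finset.mem_filter, Finset.mem_univ, true_and] at hmem
    obtain ⟨u, hu, v, hv, hends⟩ := hmem
    have h2 : s(β.pstart (g i : H.E), β.pend (g i : H.E)) = s(β.vmap u, β.vmap v) := by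
      rw [β.ends_eq, hends, Sym2.map_pair_eq]
    rw [Sym2.eq_iff] at h2
    rcases h2 with ⟨h3, h4⟩ | ⟨h3, h4⟩
    · refine ⟨⟨_, _, β.walk (g i : H.E)⟩, ?_, ?_, β.isPath _, fun e he => he⟩
      · simpa [h3] using Finset.mem_image_of_mem β.vmap hu
      · simpa [h4] using Finset.mem_image_of_mem β.vmap hv
    · refine ⟨⟨_, _, (β.walk (g i : H.E)).reverse⟩, ?_, ?_,
        Multigraph.Walk.isPath_reverse _ (β.isPath _), fun e he => ?_⟩
      · simpa [h4] using Finset.mem_image_of_mem β.vmap hu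
      · simpa [h3] using Finset.mem_image_of_mem β.vmap hv
      · rw [Multigraph.Walk.edges_reverse, List.mem_reverse] at he
        exact he
  choose P hP1 hP2 hP3 hP4 using key
  have hdisj : ∀ i j, i ≠ j → List.Disjoint (P i).2.2.edges (P j).2.2.edges := by
    intro i j hij e hei hej
    have hgij : (g i : H.E) ≠ (g j : H.E) := fun h =>
      hij (hginj (Subtype.ext h))
    exact β.edgeDisj _ _ hgij (hP4 i e hei) (hP4 j e hej)
  refine ⟨⟨P, hP1, hP2, hP3, hdisj⟩, ?_⟩
  intro C hC hC'
  have hcross : ∀ i : Fin k, ∃ e ∈ (P i).2.2.edges, e ∈ G.cut C := by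
    intro i
    apply Multigraph.Walk.exists_cut_edge
    · obtain ⟨a, ha, hae⟩ := Finset.mem_image.1 (hP1 i)
      exact hae ▸ hC a ha
    · obtain ⟨b, hb, hbe⟩ := Finset.mem_image.1 (hP2 i)
      have := hC' b hb
      rw [hbe] at this
      exact Finset.mem_compl.1 this
  choose f hf1 hf2 using hcross
  have : (Finset.univ : Finset (Fin k)).card ≤ (G.cut C).card := by
    apply Finset.card_le_card_of_injOn f (fun i _ => hf2 i)
    intro i _ j _ hfij
    by_contra hij
    exact hdisj i j hij (hf1 i) (hfij ▸ hf1 j)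
  simpa using this
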